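/- Let n_1, n_2 be positive integers with n_1 ≤ n_2 and n_1 odd. Then every arrangement A of an n_1 × n_2 matrix has spread(A) ≥ (n_1+1)n_2/2 − 1. -/

import Mathlib

/-- The spread of an arrangement of an `n₁ × n₂` matrix (a bijection from cells
to `{0,…,n₁n₂ − 1}`, a zero-based version of `{1,…,n₁n₂}`): the maximum
difference of values over all pairs of cells in a common row or column. -/
def spread2 {n₁ n₂ : ℕ} (A : Fin n₁ × Fin n₂ ≃ Fin (n₁ * n₂)) : ℕ :=
  Finset.sup Finset.univ
    (fun p : (Fin n₁ × Fin n₂) × (Fin n₁ × Fin n₂) =>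
      if p.1.1 = p.2.1 ∨ p.1.2 = p.2.2 then Nat.dist (A p.1) (A p.2) else 0)

namespace SpreadAux

variable {n₁ n₂ : ℕ} (A : Fin n₁ × Fin n₂ ≃ Fin (n₁ * n₂))

/-- Cells with value at most `t`. -/
def S (t : ℕ) : Finset (Fin n₁ × Fin n₂) :=
  Finset.univ.filter (fun p => ((A p : ℕ) ≤ t))

/-- Rows met by `S t`. -/
def R (t : ℕ) : Finset (Fin n₁) := (S A t).image Prod.fst

/-- Columns met by `S t`. -/
def C (t : ℕ) : Finset (Fin n₂) := (S A t).image Prod.snd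

/-- Union of all rows and columns met by `S t`. -/
def U (t : ℕ) : Finset (Fin n₁ × Fin n₂) :=
  (R A t) ×ˢ (Finset.univ : Finset (Fin n₂)) ∪
    (Finset.univ : Finset (Fin n₁)) ×ˢ (C A t)

lemma dist_le_spread2 {p q : Fin n₁ × Fin n₂} (h : p.1 = q.1 ∨ p.2 = q.2) :
    Nat.dist (A p) (A q) ≤ spread2 A := by
  have := Finset.le_sup (s := (Finset.univ : Finset ((Fin n₁ × Fin n₂) × (Fin n₁ × Fin n₂))))
    (f := fun r : (Fin n₁ × Fin n₂) × (Fin n₁ × Fin n₂) =>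
      if r.1.1 = r.2.1 ∨ r.1.2 = r.2.2 then Nat.dist (A r.1) (A r.2) else 0)
    (Finset.mem_univ (p, q))
  simpa only [spread2, if_pos h] using this

lemma S_subset (t : ℕ) : S A t ⊆ R A t ×ˢ C A t := by
  intro p hp
  simp only [Finset.mem_product, R, C, Finset.mem_image]
  exact ⟨⟨p, hp, rfl⟩, ⟨p, hp, rfl⟩⟩

lemma C_mono {t t' : ℕ} (h : t ≤ t') : C A t ⊆ C A t' := by
  apply Finset.image_subset_image
  intro p hp
  simp only [S, Finset.mem_filter, Finset.mem_univ, true_and] at *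
  omega

lemma card_S_ge (hN : 0 < n₁ * n₂) {t : ℕ} (ht : t < n₁ * n₂) :
    t + 1 ≤ (S A t).card := by
  have key : (Finset.range (t + 1)).card ≤ (S A t).card := by
    apply Finset.card_le_card_of_injOn
      (fun i => A.symm ⟨i % (n₁ * n₂), Nat.mod_lt _ hN⟩)
    · intro i hi
      simp only [Finset.mem_coe, Finset.mem_range] at hi
      have hlt : i < n₁ * n₂ := by omega
      simp only [Finset.mem_coe, S, Finset.mem_filter, Finset.mem_univ, true_and,
        Equiv.apply_symm_apply]
      rw [Nat.mod_eq_of_lt hlt]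
      omega
    · intro i hi j hj hij
      simp only [Finset.coe_range, Set.mem_Iio] at hi hj
      have := A.symm.injective hij
      simp only [Fin.mk.injEq] at this
      rwa [Nat.mod_eq_of_lt (by omega), Nat.mod_eq_of_lt (by omega)] at this
  simpa using key

lemma U_val_le {t : ℕ} {p : Fin n₁ × Fin n₂} (hp : p ∈ U A t) :
    (A p : ℕ) ≤ t + spread2 A := by
  simp only [U, Finset.mem_union, Finset.mem_product, Finset.mem_univ, true_and,
    and_true] at hp
  rcases hp with h | h
  · simp only [R, Finset.mem_image] at h
    obtain ⟨q, hq, hq1⟩ := h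
    simp only [S, Finset.mem_filter, Finset.mem_univ, true_and] at hq
    have hd := dist_le_spread2 A (p := p) (q := q) (Or.inl hq1.symm)
    simp only [Nat.dist] at hd
    omega
  · simp only [C, Finset.mem_image] at h
    obtain ⟨q, hq, hq2⟩ := h
    simp only [S, Finset.mem_filter, Finset.mem_univ, true_and] at hq
    have hd := dist_le_spread2 A (p := p) (q := q) (Or.inr hq2.symm)
    simp only [Nat.dist] at hd
    omega

lemma card_U_le (t : ℕ) : (U A t).card ≤ t + spread2 A + 1 := by
  have key : (U A t).card ≤ (Finset.range (t + spread2 A + 1)).card := by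
    apply Finset.card_le_card_of_injOn (fun p => (A p : ℕ))
    · intro p hp
      simp only [Finset.mem_coe, Finset.mem_range]
      have := U_val_le A hp
      omega
    · intro p _ q _ h
      exact A.injective (Fin.val_injective h)
  simpa using key

lemma card_U_eq (t : ℕ) :
    (U A t).card + (R A t).card * (C A t).card
      = (R A t).card * n₂ + n₁ * (C A t).card := by
  have h := Finset.card_union_add_card_inter
    ((R A t) ×ˢ (Finset.univ : Finset (Fin n₂)))
    ((Finset.univ : Finset (Fin n₁)) ×ˢ (C A t))
  have hint : ((R A t) ×ˢ (Finset.univ : Finset (Fin n₂))) ∩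
      ((Finset.univ : Finset (Fin n₁)) ×ˢ (C A t)) = (R A t) ×ˢ (C A t) := by
    ext p
    simp [Finset.mem_product]
  rw [hint] at h
  simpa [U, Finset.card_product] using h

end SpreadAux

/-- If `n₁ ≤ n₂` and `n₁` is odd, every arrangement of an `n₁ × n₂` matrix
has spread at least `(n₁+1)n₂/2 − 1`. -/
theorem spread2_lower_bound_odd (n₁ n₂ : ℕ) (h₁ : 1 ≤ n₁) (h₂ : 1 ≤ n₂)
    (hle : n₁ ≤ n₂) (hodd : Odd n₁)
    (A : Fin n₁ × Fin n₂ ≃ Fin (n₁ * n₂)) :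
    (n₁ + 1) * n₂ / 2 - 1 ≤ spread2 A := by
  obtain ⟨m, hm⟩ := hodd
  have hNpos : 0 < n₁ * n₂ := Nat.mul_pos h₁ h₂
  -- at the last time, every row is met
  have hlast : m + 1 ≤ (SpreadAux.R A (n₁ * n₂ - 1)).card := by
    have hRall : SpreadAux.R A (n₁ * n₂ - 1) = Finset.univ := by
      apply Finset.eq_univ_of_forall
      intro i
      simp only [SpreadAux.R, Finset.mem_image]
      refine ⟨(i, ⟨0, h₂⟩), ?_, rfl⟩
      simp only [SpreadAux.S, Finset.mem_filter, Finset.mem_univ, true_and]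
      have := (A (i, ⟨0, h₂⟩)).isLt
      omega
    rw [hRall]
    simp only [Finset.card_univ, Fintype.card_fin]
    omega
  have hP : ∃ t, m + 1 ≤ (SpreadAux.R A t).card := ⟨_, hlast⟩
  set t₀ := Nat.find hP with ht₀def
  have hρ : m + 1 ≤ (SpreadAux.R A t₀).card := Nat.find_spec hP
  have ht₀le : t₀ ≤ n₁ * n₂ - 1 := Nat.find_min' hP hlast
  -- the crucial timing bound
  have htc : t₀ ≤ m * (SpreadAux.C A t₀).card := by
    rcases Nat.eq_zero_or_pos t₀ with h0 | hpos
    · simp [h0]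
    · have hnot : ¬ (m + 1 ≤ (SpreadAux.R A (t₀ - 1)).card) :=
        Nat.find_min hP (by omega)
      have h1 : t₀ ≤ (SpreadAux.S A (t₀ - 1)).card := by
        have := SpreadAux.card_S_ge A hNpos (t := t₀ - 1) (by omega)
        omega
      have h2 : (SpreadAux.S A (t₀ - 1)).card ≤
          (SpreadAux.R A (t₀ - 1)).card * (SpreadAux.C A (t₀ - 1)).card := by
        have := Finset.card_le_card (SpreadAux.S_subset A (t₀ - 1))
        rwa [Finset.card_product] at this
      have h3 : (SpreadAux.C A (t₀ - 1)).card ≤ (SpreadAux.C A t₀).card :=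
        Finset.card_le_card (SpreadAux.C_mono A (by omega))
      have hr : (SpreadAux.R A (t₀ - 1)).card ≤ m := by omega
      calc t₀ ≤ (SpreadAux.S A (t₀ - 1)).card := h1
        _ ≤ (SpreadAux.R A (t₀ - 1)).card * (SpreadAux.C A (t₀ - 1)).card := h2
        _ ≤ m * (SpreadAux.C A t₀).card := Nat.mul_le_mul hr h3
  set r := (SpreadAux.R A t₀).card with hrdef
  set c := (SpreadAux.C A t₀).card with hcdef
  have hrn : r ≤ n₁ := by
    have := Finset.card_le_univ (SpreadAux.R A t₀)
    simpa using this
  have hcn : c ≤ n₂ := by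
    have := Finset.card_le_univ (SpreadAux.C A t₀)
    simpa using this
  have hU := SpreadAux.card_U_eq A t₀
  have hUle := SpreadAux.card_U_le A t₀
  have hkey : t₀ + (m + 1) * n₂ + r * c ≤ r * n₂ + n₁ * c := by
    have h1 : (t₀ : ℤ) ≤ (m : ℤ) * c := by exact_mod_cast htc
    have h2 : (m : ℤ) + 1 ≤ r := by exact_mod_cast hρ
    have h3 : (c : ℤ) ≤ n₂ := by exact_mod_cast hcn
    have h4 : (n₁ : ℤ) = 2 * m + 1 := by exact_mod_cast hm
    zify
    nlinarith [mul_nonneg (by linarith : (0:ℤ) ≤ (r : ℤ) - ((m : ℤ) + 1))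
      (by linarith : (0:ℤ) ≤ (n₂ : ℤ) - (c : ℤ))]
  have hfin : (m + 1) * n₂ ≤ spread2 A + 1 := by linarith [hU, hUle, hkey]
  have hdiv : (n₁ + 1) * n₂ / 2 = (m + 1) * n₂ := by
    subst hm
    rw [show (2 * m + 1 + 1) * n₂ = 2 * ((m + 1) * n₂) by ring]
    exact Nat.mul_div_cancel_left _ (by norm_num)
  rw [hdiv]
  exact Nat.sub_le_iff_le_add.mpr (by linarith)
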